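/- Let ε > 0 and let C' be a k-clustering. Suppose that for all i, j ∈ [k]: |F_{i,j}(C') − F̂_{i,j}(C')| ≤ ε·|C_{ij} × (C_i \ C_{ij})|, and for all i₁ < i₂ and j in [k]: |F_{i₁,i₂,j}(C') − F̂_{i₁,i₂,j}(C')| ≤ ε·max{ |C_{i₁ j} × C_{i₂ j}|, |C_{i₁ j} × (C_{i₁} \ C_{i₁ j})|/k, |C_{i₂ j} × (C_{i₂} \ C_{i₂ j})|/k }. Then |f(C') − f̂(C')| ≤ 3ε·d(C, C'), where f(C') = cost(C') − cost(C), f̂(C') = (1/2) Σ_{i,j} F̂_{i,j}(C') + Σ_j Σ_{i₁<i₂} F̂_{i₁,i₂,j}(C'), and d is the disagreement distance. -/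

import Mathlib

open Finset

attribute [local instance] Classical.propDecidable

/-- A `k`-clustering of `V` is encoded by its cluster-assignment function `Cl : V → Fin k`;
two points are in the same cluster iff they have the same assigned index.
`cluster Cl i` is the `i`-th cluster `C_i`, as a finset. -/
noncomputable def cluster {V : Type*} [Fintype V] {k : ℕ} (Cl : V → Fin k) (i : Fin k) : Finset V :=
  Finset.univ.filter fun v => Cl v = i

/-- `cost_{u,v}(C) = 1[(u,v) ∈ E]·1[u ≢_C v] + 1[(u,v) ∉ E]·1[u ≡_C v]`. -/
noncomputable def costuv {V : Type*} {k : ℕ} (G : SimpleGraph V) (Cl : V → Fin k) (u v : V) : ℝ :=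
  (if G.Adj u v then (if Cl u = Cl v then 0 else 1) else (if Cl u = Cl v then 1 else 0))

/-- `cost(C)`: the number of unordered pairs of distinct points on which the clustering
`Cl` disagrees with the graph `G` (each unordered pair counted once, via half the sum
over ordered pairs). -/
noncomputable def cost {V : Type*} [Fintype V] {k : ℕ} (G : SimpleGraph V) (Cl : V → Fin k) : ℝ :=
  (1 / 2) * ∑ u : V, ∑ v : V, if u ≠ v then costuv G Cl u v else 0

/-- The disagreement distance between two `k`-clusterings:
`d(C,C') = (1/2) Σ_{u ≠ v} (1[u ≡_{C'} v]·1[u ≢_C v] + 1[u ≡_C v]·1[u ≢_{C'} v])`. -/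
noncomputable def dd {V : Type*} [Fintype V] {k : ℕ} (Cl Cl' : V → Fin k) : ℝ :=
  (1 / 2) * ∑ u : V, ∑ v : V, if u ≠ v then
      ((if Cl' u = Cl' v ∧ ¬Cl u = Cl v then (1 : ℝ) else 0) +
        (if Cl u = Cl v ∧ ¬Cl' u = Cl' v then (1 : ℝ) else 0))
    else 0

/-- `f_{u,v}(C') = cost_{u,v}(C') - cost_{u,v}(C)`. -/
noncomputable def fuv {V : Type*} {k : ℕ} (G : SimpleGraph V) (Cl Cl' : V → Fin k) (u v : V) : ℝ :=
  costuv G Cl' u v - costuv G Cl u v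


section aux
variable {V : Type*} [Fintype V] {k : ℕ}

lemma aux_ite_sum {c : Prop} [Decidable c] {α : Type*} {s : Finset α} (f : α → ℝ) :
    (if c then ∑ x ∈ s, f x else 0) = ∑ x ∈ s, if c then f x else 0 := by
  split <;> simp

lemma aux_sum_pair (p q : V → Prop) [DecidablePred p] [DecidablePred q] (g : V → V → ℝ) :
    (∑ u ∈ Finset.univ.filter p, ∑ v ∈ Finset.univ.filter q, g u v)
      = ∑ u : V, ∑ v : V, if p u ∧ q v then g u v else 0 := by
  rw [Finset.sum_filter]
  refine Finset.sum_congr rfl fun u _ => ?_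
  rw [Finset.sum_filter, aux_ite_sum]
  exact Finset.sum_congr rfl fun v _ => by rw [← ite_and]

lemma collapse2 (a b : Fin k) (Q : Fin k → Fin k → Prop) (r : ℝ) :
    (∑ i : Fin k, ∑ j : Fin k, if (a = i ∧ b = j) ∧ Q i j then r else 0)
      = if Q a b then r else 0 := by
  rw [Finset.sum_eq_single a]
  · rw [Finset.sum_eq_single b]
    · simp
    · intro j _ hj; simp [Ne.symm hj]
    · simp
  · intro i _ hi
    apply Finset.sum_eq_zero
    intro j _
    simp [Ne.symm hi]
  · simp

lemma collapse3 (a b c : Fin k) (Q : Fin k → Fin k → Fin k → Prop) (r : ℝ) :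
    (∑ j : Fin k, ∑ i₁ : Fin k, ∑ i₂ : Fin k,
        if (a = j ∧ b = i₁ ∧ c = i₂) ∧ Q j i₁ i₂ then r else 0)
      = if Q a b c then r else 0 := by
  rw [Finset.sum_eq_single a]
  · rw [Finset.sum_eq_single b]
    · rw [Finset.sum_eq_single c]
      · simp
      · intro i _ hi; simp [Ne.symm hi]
      · simp
    · intro i _ hi
      apply Finset.sum_eq_zero
      intro j _
      simp [Ne.symm hi]
    · simp
  · intro i _ hi
    apply Finset.sum_eq_zero
    intro j _
    apply Finset.sum_eq_zero
    intro l _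
    simp [Ne.symm hi]
  · simp

lemma swap_out {A B C : Type*} [Fintype A] [Fintype B] [Fintype C] (f : A → B → C → ℝ) :
    ∑ x : A, ∑ u : B, ∑ v : C, f x u v = ∑ u : B, ∑ v : C, ∑ x : A, f x u v := by
  rw [Finset.sum_comm]
  exact Finset.sum_congr rfl fun u _ => Finset.sum_comm

end aux
section aux2
set_option linter.unusedSectionVars false
variable {V : Type*} [Fintype V] {k : ℕ}

lemma cluster_inter (Cl Cl' : V → Fin k) (i j : Fin k) :
    cluster Cl i ∩ cluster Cl' j = Finset.univ.filter (fun v => Cl v = i ∧ Cl' v = j) := by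
  ext v; simp [cluster]

lemma cluster_sdiff (Cl Cl' : V → Fin k) (i j : Fin k) :
    cluster Cl i \ (cluster Cl i ∩ cluster Cl' j)
      = Finset.univ.filter (fun v => Cl v = i ∧ ¬ Cl' v = j) := by
  ext v; simp [cluster]

lemma M1 (Cl Cl' : V → Fin k) (g : V → V → ℝ) :
    (∑ i : Fin k, ∑ j : Fin k, ∑ u ∈ cluster Cl i ∩ cluster Cl' j,
        ∑ v ∈ cluster Cl i \ (cluster Cl i ∩ cluster Cl' j), g u v)
      = ∑ u : V, ∑ v : V, if Cl u = Cl v ∧ ¬ Cl' u = Cl' v then g u v else 0 := by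
  simp_rw [cluster_sdiff, cluster_inter, aux_sum_pair]
  rw [Finset.sum_congr rfl fun i (_ : i ∈ Finset.univ) => swap_out _]
  rw [swap_out]
  refine Finset.sum_congr rfl fun u _ => Finset.sum_congr rfl fun v _ => ?_
  have h := collapse2 (Cl u) (Cl' u) (fun i j => Cl v = i ∧ ¬ Cl' v = j) (g u v)
  have h2 : (if Cl v = Cl u ∧ ¬ Cl' v = Cl' u then g u v else 0)
      = if Cl u = Cl v ∧ ¬ Cl' u = Cl' v then g u v else 0 :=
    if_congr ⟨fun ⟨h1, h2⟩ => ⟨h1.symm, fun e => h2 e.symm⟩,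
      fun ⟨h1, h2⟩ => ⟨h1.symm, fun e => h2 e.symm⟩⟩ rfl rfl
  rw [← h2]
  convert h using 7 <;> first | rfl | exact Subsingleton.elim _ _

lemma M2 (Cl Cl' : V → Fin k) (g : V → V → ℝ) :
    (∑ j : Fin k, ∑ i₁ : Fin k, ∑ i₂ : Fin k, if i₁ < i₂ then
        ∑ u ∈ cluster Cl i₁ ∩ cluster Cl' j, ∑ v ∈ cluster Cl i₂ ∩ cluster Cl' j, g u v else 0)
      = ∑ u : V, ∑ v : V, if Cl' u = Cl' v ∧ Cl u < Cl v then g u v else 0 := by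
  simp_rw [cluster_inter, aux_sum_pair, aux_ite_sum, ← ite_and]
  have reshape : ∀ (j i₁ i₂ : Fin k) (u v : V),
      (if i₁ < i₂ ∧ ((Cl u = i₁ ∧ Cl' u = j) ∧ (Cl v = i₂ ∧ Cl' v = j)) then g u v else 0)
        = (if (Cl' u = j ∧ Cl u = i₁ ∧ Cl v = i₂) ∧ (i₁ < i₂ ∧ Cl' v = j) then g u v else 0) :=
    fun j i₁ i₂ u v => if_congr (by tauto) rfl rfl
  simp_rw [reshape]
  rw [Finset.sum_congr rfl fun j (_ : j ∈ Finset.univ) =>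
        Finset.sum_congr rfl fun i₁ (_ : i₁ ∈ Finset.univ) => swap_out _]
  rw [Finset.sum_congr rfl fun j (_ : j ∈ Finset.univ) => swap_out _]
  rw [swap_out]
  refine Finset.sum_congr rfl fun u _ => Finset.sum_congr rfl fun v _ => ?_
  have h := collapse3 (Cl' u) (Cl u) (Cl v)
      (fun j i₁ i₂ => i₁ < i₂ ∧ Cl' v = j) (g u v)
  have h2 : (if Cl u < Cl v ∧ Cl' v = Cl' u then g u v else 0)
      = if Cl' u = Cl' v ∧ Cl u < Cl v then g u v else 0 :=
    if_congr ⟨fun ⟨h1, h2⟩ => ⟨h2.symm, h1⟩, fun ⟨h1, h2⟩ => ⟨h2, h1.symm⟩⟩ rfl rfl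
  rw [← h2]
  convert h using 7 <;> first | rfl | exact Subsingleton.elim _ _

lemma M3 (Cl Cl' : V → Fin k) (g : V → V → ℝ) (hg : ∀ u v, g u v = g v u) :
    (∑ u : V, ∑ v : V, if Cl' u = Cl' v ∧ ¬ Cl u = Cl v then g u v else 0)
      = 2 * ∑ u : V, ∑ v : V, if Cl' u = Cl' v ∧ Cl u < Cl v then g u v else 0 := by
  have key : ∀ u v : V, (if Cl' u = Cl' v ∧ ¬ Cl u = Cl v then g u v else 0)
      = (if Cl' u = Cl' v ∧ Cl u < Cl v then g u v else 0)
        + (if Cl' u = Cl' v ∧ Cl v < Cl u then g u v else 0) := by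
    intro u v
    rcases lt_trichotomy (Cl u) (Cl v) with h | h | h
    · simp [h, h.ne, asymm h]
    · simp [h, lt_irrefl]
    · simp [h, h.ne', asymm h]
  simp_rw [key, Finset.sum_add_distrib]
  have h2 : (∑ u : V, ∑ v : V, if Cl' u = Cl' v ∧ Cl v < Cl u then g u v else 0)
      = ∑ u : V, ∑ v : V, if Cl' u = Cl' v ∧ Cl u < Cl v then g u v else 0 := by
    rw [Finset.sum_comm]
    refine Finset.sum_congr rfl fun u _ => Finset.sum_congr rfl fun v _ => ?_
    rw [hg v u]
    exact if_congr ⟨fun ⟨h1, h2⟩ => ⟨h1.symm, h2⟩, fun ⟨h1, h2⟩ => ⟨h1.symm, h2⟩⟩ rfl rfl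
  rw [h2]; ring

lemma costuv_symm (G : SimpleGraph V) (Cl : V → Fin k) (u v : V) :
    costuv G Cl u v = costuv G Cl v u := by
  unfold costuv
  by_cases h1 : G.Adj u v <;> by_cases h2 : Cl u = Cl v
  · rw [if_pos h1, if_pos (G.adj_symm h1), if_pos h2, if_pos h2.symm]
  · rw [if_pos h1, if_pos (G.adj_symm h1), if_neg h2, if_neg (fun e => h2 e.symm)]
  · rw [if_neg h1, if_neg (fun e => h1 (G.adj_symm e)), if_pos h2, if_pos h2.symm]
  · rw [if_neg h1, if_neg (fun e => h1 (G.adj_symm e)), if_neg h2, if_neg (fun e => h2 e.symm)]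

lemma fuv_symm (G : SimpleGraph V) (Cl Cl' : V → Fin k) (u v : V) :
    fuv G Cl Cl' u v = fuv G Cl Cl' v u := by
  simp only [fuv, costuv_symm G Cl u v, costuv_symm G Cl' u v]

lemma fuv_diag (G : SimpleGraph V) (Cl Cl' : V → Fin k) (u : V) :
    fuv G Cl Cl' u u = 0 := by
  simp [fuv, costuv]

lemma fuv_split (G : SimpleGraph V) (Cl Cl' : V → Fin k) (u v : V) :
    fuv G Cl Cl' u v = (if Cl u = Cl v ∧ ¬ Cl' u = Cl' v then fuv G Cl Cl' u v else 0)
      + (if Cl' u = Cl' v ∧ ¬ Cl u = Cl v then fuv G Cl Cl' u v else 0) := by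
  by_cases h1 : Cl u = Cl v <;> by_cases h2 : Cl' u = Cl' v <;>
    simp [fuv, costuv, h1, h2]

lemma cost_diff (G : SimpleGraph V) (Cl Cl' : V → Fin k) :
    cost G Cl' - cost G Cl = (1 / 2) * ∑ u : V, ∑ v : V, fuv G Cl Cl' u v := by
  unfold cost
  rw [← mul_sub, ← Finset.sum_sub_distrib]
  congr 1
  refine Finset.sum_congr rfl fun u _ => ?_
  rw [← Finset.sum_sub_distrib]
  refine Finset.sum_congr rfl fun v _ => ?_
  by_cases h : u = v
  · subst h; simp [fuv_diag]
  · simp [h, fuv]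

lemma card_prod_sum (s t : Finset V) :
    (s.card : ℝ) * (t.card : ℝ) = ∑ u ∈ s, ∑ v ∈ t, (1 : ℝ) := by
  simp [Finset.sum_const, nsmul_eq_mul, mul_comm]

end aux2
section aux3
variable {k : ℕ}

lemma ite_sub_zero {c : Prop} [Decidable c] (x y : ℝ) :
    (if c then x else 0) - (if c then y else 0) = if c then x - y else 0 := by
  split <;> simp

lemma abs_ite_zero {c : Prop} [Decidable c] (x : ℝ) :
    |if c then x else 0| = if c then |x| else 0 := by
  split <;> simp

lemma step4 (c : Fin k → ℝ) (hc : ∀ i, 0 ≤ c i) :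
    (∑ i₁ : Fin k, ∑ i₂ : Fin k, if i₁ < i₂ then c i₁ + c i₂ else 0)
      ≤ (k : ℝ) * ∑ i : Fin k, c i := by
  have e1 : ∀ i₁ i₂ : Fin k, (if i₁ < i₂ then c i₁ + c i₂ else 0)
      = (if i₁ < i₂ then c i₁ else 0) + (if i₁ < i₂ then c i₂ else 0) := by
    intro i₁ i₂; split <;> simp
  simp_rw [e1, Finset.sum_add_distrib]
  have hR : (∑ i₁ : Fin k, ∑ i₂ : Fin k, if i₁ < i₂ then c i₂ else 0)
      = ∑ i₁ : Fin k, ∑ i₂ : Fin k, if i₂ < i₁ then c i₁ else 0 := Finset.sum_comm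
  rw [hR, ← Finset.sum_add_distrib]
  simp_rw [← Finset.sum_add_distrib]
  calc (∑ i : Fin k, ∑ i' : Fin k,
        ((if i < i' then c i else 0) + (if i' < i then c i else 0)))
      ≤ ∑ i : Fin k, ∑ _i' : Fin k, c i := by
        refine Finset.sum_le_sum fun i _ => Finset.sum_le_sum fun i' _ => ?_
        rcases lt_trichotomy i i' with h | h | h
        · simp [h, asymm h]
        · simp [h, lt_irrefl, hc i']
        · simp [h, asymm h]
    _ = (k : ℝ) * ∑ i : Fin k, c i := by
        simp [Finset.sum_const, Finset.card_univ, Fintype.card_fin, nsmul_eq_mul,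
          Finset.mul_sum]

end aux3
set_option maxHeartbeats 2000000

/-- deterministic part of Lemma 3 of the paper.  Let `ε > 0` and let
`C'` be a `k`-clustering.  Suppose the real numbers `F̂_{i,j}` and `F̂_{i₁,i₂,j}` satisfy
`|F_{i,j}(C') − F̂_{i,j}| ≤ ε·|C_{ij} × (C_i \ C_{ij})|` for all `i, j`, and
`|F_{i₁,i₂,j}(C') − F̂_{i₁,i₂,j}| ≤ ε·max{|C_{i₁j} × C_{i₂j}|, |C_{i₁j} × (C_{i₁}\C_{i₁j})|/k,
|C_{i₂j} × (C_{i₂}\C_{i₂j})|/k}` for all `i₁ < i₂`, `j`.  Then, with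
`f̂(C') = (1/2) Σ_{i,j} F̂_{i,j} + Σ_j Σ_{i₁<i₂} F̂_{i₁,i₂,j}` and
`f(C') = cost(C') − cost(C)`, we have `|f(C') − f̂(C')| ≤ 3ε·d(C,C')`. -/
theorem stmt16 {V : Type*} [Fintype V] {k : ℕ} (G : SimpleGraph V)
    (Cl Cl' : V → Fin k) (ε : ℝ) (hε : 0 < ε)
    (Fhat : Fin k → Fin k → ℝ) (Fhat3 : Fin k → Fin k → Fin k → ℝ)
    (h1 : ∀ i j : Fin k,
      |(∑ u ∈ cluster Cl i ∩ cluster Cl' j,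
            ∑ v ∈ cluster Cl i \ (cluster Cl i ∩ cluster Cl' j), fuv G Cl Cl' u v)
          - Fhat i j|
        ≤ ε * (((cluster Cl i ∩ cluster Cl' j).card : ℝ) *
            ((cluster Cl i \ (cluster Cl i ∩ cluster Cl' j)).card : ℝ)))
    (h2 : ∀ i₁ i₂ j : Fin k, i₁ < i₂ →
      |(∑ u ∈ cluster Cl i₁ ∩ cluster Cl' j,
            ∑ v ∈ cluster Cl i₂ ∩ cluster Cl' j, fuv G Cl Cl' u v)
          - Fhat3 i₁ i₂ j|
        ≤ ε * max
            (((cluster Cl i₁ ∩ cluster Cl' j).card : ℝ) *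
              ((cluster Cl i₂ ∩ cluster Cl' j).card : ℝ))
            (max
              (((cluster Cl i₁ ∩ cluster Cl' j).card : ℝ) *
                  ((cluster Cl i₁ \ (cluster Cl i₁ ∩ cluster Cl' j)).card : ℝ) / (k : ℝ))
              (((cluster Cl i₂ ∩ cluster Cl' j).card : ℝ) *
                  ((cluster Cl i₂ \ (cluster Cl i₂ ∩ cluster Cl' j)).card : ℝ) / (k : ℝ)))) :
    |(cost G Cl' - cost G Cl)
        - ((1 / 2) * ∑ i : Fin k, ∑ j : Fin k, Fhat i j
            + ∑ j : Fin k, ∑ i₁ : Fin k, ∑ i₂ : Fin k,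
                if i₁ < i₂ then Fhat3 i₁ i₂ j else 0)|
      ≤ 3 * ε * dd Cl Cl' := by
  classical
  rcases Nat.eq_zero_or_pos k with hk | hk
  · subst hk
    have hV : IsEmpty V := ⟨fun v => (Cl v).elim0⟩
    simp [cost, dd]
  have hk0 : (0:ℝ) < (k:ℝ) := by exact_mod_cast hk
  have key1 := M1 Cl Cl' (fuv G Cl Cl')
  have key2 := M2 Cl Cl' (fuv G Cl Cl')
  have hM3 := M3 Cl Cl' (fuv G Cl Cl') (fuv_symm G Cl Cl')
  have hsplit : (∑ u : V, ∑ v : V, fuv G Cl Cl' u v)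
      = (∑ u : V, ∑ v : V, if Cl u = Cl v ∧ ¬ Cl' u = Cl' v then fuv G Cl Cl' u v else 0)
        + ∑ u : V, ∑ v : V, if Cl' u = Cl' v ∧ ¬ Cl u = Cl v then fuv G Cl Cl' u v else 0 := by
    rw [← Finset.sum_add_distrib]
    refine Finset.sum_congr rfl fun u _ => ?_
    rw [← Finset.sum_add_distrib]
    exact Finset.sum_congr rfl fun v _ => fuv_split G Cl Cl' u v
  have hcost : cost G Cl' - cost G Cl
      = (1/2) * (∑ u : V, ∑ v : V, if Cl u = Cl v ∧ ¬ Cl' u = Cl' v then fuv G Cl Cl' u v else 0)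
        + (∑ u : V, ∑ v : V, if Cl' u = Cl' v ∧ Cl u < Cl v then fuv G Cl Cl' u v else 0) := by
    rw [cost_diff, hsplit, hM3]; ring
  have hA : (∑ i : Fin k, ∑ j : Fin k, ((cluster Cl i ∩ cluster Cl' j).card : ℝ) *
        ((cluster Cl i \ (cluster Cl i ∩ cluster Cl' j)).card : ℝ))
      = ∑ u : V, ∑ v : V, if Cl u = Cl v ∧ ¬ Cl' u = Cl' v then (1:ℝ) else 0 := by
    simp_rw [card_prod_sum]
    exact M1 Cl Cl' (fun _ _ => (1:ℝ))
  have hS : (∑ j : Fin k, ∑ i₁ : Fin k, ∑ i₂ : Fin k, if i₁ < i₂ then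
        ((cluster Cl i₁ ∩ cluster Cl' j).card : ℝ) *
          ((cluster Cl i₂ ∩ cluster Cl' j).card : ℝ) else 0)
      = ∑ u : V, ∑ v : V, if Cl' u = Cl' v ∧ Cl u < Cl v then (1:ℝ) else 0 := by
    simp_rw [card_prod_sum]
    exact M2 Cl Cl' (fun _ _ => (1:ℝ))
  have hM3c : (∑ u : V, ∑ v : V, if Cl' u = Cl' v ∧ ¬ Cl u = Cl v then (1:ℝ) else 0)
      = 2 * ∑ u : V, ∑ v : V, if Cl' u = Cl' v ∧ Cl u < Cl v then (1:ℝ) else 0 :=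
    M3 Cl Cl' (fun _ _ => (1:ℝ)) (fun _ _ => rfl)
  have hdd : dd Cl Cl'
      = (1/2) * (∑ u : V, ∑ v : V, if Cl u = Cl v ∧ ¬ Cl' u = Cl' v then (1:ℝ) else 0)
        + (∑ u : V, ∑ v : V, if Cl' u = Cl' v ∧ Cl u < Cl v then (1:ℝ) else 0) := by
    unfold dd
    have e : ∀ u v : V, (if u ≠ v then
          ((if Cl' u = Cl' v ∧ ¬Cl u = Cl v then (1:ℝ) else 0) +
           (if Cl u = Cl v ∧ ¬Cl' u = Cl' v then (1:ℝ) else 0)) else 0)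
        = (if Cl' u = Cl' v ∧ ¬Cl u = Cl v then (1:ℝ) else 0)
          + (if Cl u = Cl v ∧ ¬Cl' u = Cl' v then (1:ℝ) else 0) := by
      intro u v
      by_cases h : u = v
      · subst h; simp
      · simp [h]
    simp_rw [e, Finset.sum_add_distrib]
    rw [hM3c]; ring
  have hE : (cost G Cl' - cost G Cl)
      - ((1 / 2) * ∑ i : Fin k, ∑ j : Fin k, Fhat i j
          + ∑ j : Fin k, ∑ i₁ : Fin k, ∑ i₂ : Fin k,
              if i₁ < i₂ then Fhat3 i₁ i₂ j else 0)
    = (1/2) * (∑ i : Fin k, ∑ j : Fin k,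
          ((∑ u ∈ cluster Cl i ∩ cluster Cl' j,
              ∑ v ∈ cluster Cl i \ (cluster Cl i ∩ cluster Cl' j), fuv G Cl Cl' u v)
            - Fhat i j))
      + ∑ j : Fin k, ∑ i₁ : Fin k, ∑ i₂ : Fin k,
          (if i₁ < i₂ then
            ((∑ u ∈ cluster Cl i₁ ∩ cluster Cl' j,
                ∑ v ∈ cluster Cl i₂ ∩ cluster Cl' j, fuv G Cl Cl' u v)
              - Fhat3 i₁ i₂ j) else 0) := by
    have d1 : (∑ i : Fin k, ∑ j : Fin k,
          ((∑ u ∈ cluster Cl i ∩ cluster Cl' j,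
              ∑ v ∈ cluster Cl i \ (cluster Cl i ∩ cluster Cl' j), fuv G Cl Cl' u v)
            - Fhat i j))
        = (∑ i : Fin k, ∑ j : Fin k, ∑ u ∈ cluster Cl i ∩ cluster Cl' j,
              ∑ v ∈ cluster Cl i \ (cluster Cl i ∩ cluster Cl' j), fuv G Cl Cl' u v)
          - ∑ i : Fin k, ∑ j : Fin k, Fhat i j := by
      simp_rw [Finset.sum_sub_distrib]
    have d2 : (∑ j : Fin k, ∑ i₁ : Fin k, ∑ i₂ : Fin k,
          (if i₁ < i₂ then
            ((∑ u ∈ cluster Cl i₁ ∩ cluster Cl' j,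
                ∑ v ∈ cluster Cl i₂ ∩ cluster Cl' j, fuv G Cl Cl' u v)
              - Fhat3 i₁ i₂ j) else 0))
        = (∑ j : Fin k, ∑ i₁ : Fin k, ∑ i₂ : Fin k, if i₁ < i₂ then
              ∑ u ∈ cluster Cl i₁ ∩ cluster Cl' j,
                ∑ v ∈ cluster Cl i₂ ∩ cluster Cl' j, fuv G Cl Cl' u v else 0)
          - ∑ j : Fin k, ∑ i₁ : Fin k, ∑ i₂ : Fin k,
              if i₁ < i₂ then Fhat3 i₁ i₂ j else 0 := by
      simp_rw [← ite_sub_zero, Finset.sum_sub_distrib]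
    rw [d1, d2, key1, key2, hcost]; ring
  rw [hE]
  -- abs bounds
  have bX : |∑ i : Fin k, ∑ j : Fin k,
        ((∑ u ∈ cluster Cl i ∩ cluster Cl' j,
            ∑ v ∈ cluster Cl i \ (cluster Cl i ∩ cluster Cl' j), fuv G Cl Cl' u v)
          - Fhat i j)|
      ≤ ∑ i : Fin k, ∑ j : Fin k,
        |(∑ u ∈ cluster Cl i ∩ cluster Cl' j,
            ∑ v ∈ cluster Cl i \ (cluster Cl i ∩ cluster Cl' j), fuv G Cl Cl' u v)
          - Fhat i j| :=
    (Finset.abs_sum_le_sum_abs _ _).trans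
      (Finset.sum_le_sum fun i _ => Finset.abs_sum_le_sum_abs _ _)
  have bY : |∑ j : Fin k, ∑ i₁ : Fin k, ∑ i₂ : Fin k,
        (if i₁ < i₂ then
          ((∑ u ∈ cluster Cl i₁ ∩ cluster Cl' j,
              ∑ v ∈ cluster Cl i₂ ∩ cluster Cl' j, fuv G Cl Cl' u v)
            - Fhat3 i₁ i₂ j) else 0)|
      ≤ ∑ j : Fin k, ∑ i₁ : Fin k, ∑ i₂ : Fin k,
        (if i₁ < i₂ then
          |(∑ u ∈ cluster Cl i₁ ∩ cluster Cl' j,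
              ∑ v ∈ cluster Cl i₂ ∩ cluster Cl' j, fuv G Cl Cl' u v)
            - Fhat3 i₁ i₂ j| else 0) := by
    refine (Finset.abs_sum_le_sum_abs _ _).trans (Finset.sum_le_sum fun j _ => ?_)
    refine (Finset.abs_sum_le_sum_abs _ _).trans (Finset.sum_le_sum fun i₁ _ => ?_)
    refine (Finset.abs_sum_le_sum_abs _ _).trans (Finset.sum_le_sum fun i₂ _ => ?_)
    rw [abs_ite_zero]
  -- termwise bounds
  have bX2 : (∑ i : Fin k, ∑ j : Fin k,
        |(∑ u ∈ cluster Cl i ∩ cluster Cl' j,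
            ∑ v ∈ cluster Cl i \ (cluster Cl i ∩ cluster Cl' j), fuv G Cl Cl' u v)
          - Fhat i j|)
      ≤ ε * ∑ i : Fin k, ∑ j : Fin k, ((cluster Cl i ∩ cluster Cl' j).card : ℝ) *
          ((cluster Cl i \ (cluster Cl i ∩ cluster Cl' j)).card : ℝ) := by
    rw [Finset.mul_sum]
    refine Finset.sum_le_sum fun i _ => ?_
    rw [Finset.mul_sum]
    exact Finset.sum_le_sum fun j _ => h1 i j
  have hmax : ∀ (x y z : ℝ), 0 ≤ x → 0 ≤ y → 0 ≤ z →
      ε * max x (max (y/(k:ℝ)) (z/(k:ℝ))) ≤ ε * x + (ε/(k:ℝ)) * (y + z) := by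
    intro x y z hx hy hz
    have hy' : 0 ≤ y/(k:ℝ) := div_nonneg hy hk0.le
    have hz' : 0 ≤ z/(k:ℝ) := div_nonneg hz hk0.le
    have hmx : max x (max (y/(k:ℝ)) (z/(k:ℝ))) ≤ x + y/(k:ℝ) + z/(k:ℝ) := by
      apply max_le
      · linarith
      · apply max_le <;> linarith
    calc ε * max x (max (y/(k:ℝ)) (z/(k:ℝ))) ≤ ε * (x + y/(k:ℝ) + z/(k:ℝ)) :=
          mul_le_mul_of_nonneg_left hmx hε.le
      _ = ε * x + (ε/(k:ℝ)) * (y + z) := by field_simp; ring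
  have bY2 : (∑ j : Fin k, ∑ i₁ : Fin k, ∑ i₂ : Fin k,
        (if i₁ < i₂ then
          |(∑ u ∈ cluster Cl i₁ ∩ cluster Cl' j,
              ∑ v ∈ cluster Cl i₂ ∩ cluster Cl' j, fuv G Cl Cl' u v)
            - Fhat3 i₁ i₂ j| else 0))
      ≤ ∑ j : Fin k, ∑ i₁ : Fin k, ∑ i₂ : Fin k,
        (if i₁ < i₂ then
          (ε * (((cluster Cl i₁ ∩ cluster Cl' j).card : ℝ) *
              ((cluster Cl i₂ ∩ cluster Cl' j).card : ℝ))
            + (ε/(k:ℝ)) * ((((cluster Cl i₁ ∩ cluster Cl' j).card : ℝ) *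
                  ((cluster Cl i₁ \ (cluster Cl i₁ ∩ cluster Cl' j)).card : ℝ))
                + (((cluster Cl i₂ ∩ cluster Cl' j).card : ℝ) *
                  ((cluster Cl i₂ \ (cluster Cl i₂ ∩ cluster Cl' j)).card : ℝ)))) else 0) := by
    refine Finset.sum_le_sum fun j _ => Finset.sum_le_sum fun i₁ _ =>
      Finset.sum_le_sum fun i₂ _ => ?_
    by_cases h : i₁ < i₂
    · simp only [if_pos h]
      refine (h2 i₁ i₂ j h).trans ?_
      have := hmax (((cluster Cl i₁ ∩ cluster Cl' j).card : ℝ) *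
              ((cluster Cl i₂ ∩ cluster Cl' j).card : ℝ))
          (((cluster Cl i₁ ∩ cluster Cl' j).card : ℝ) *
              ((cluster Cl i₁ \ (cluster Cl i₁ ∩ cluster Cl' j)).card : ℝ))
          (((cluster Cl i₂ ∩ cluster Cl' j).card : ℝ) *
              ((cluster Cl i₂ \ (cluster Cl i₂ ∩ cluster Cl' j)).card : ℝ))
          (by positivity) (by positivity) (by positivity)
      simpa [mul_div_assoc] using this
    · simp [h]
  -- split the RHS of bY2
  have bY3 : (∑ j : Fin k, ∑ i₁ : Fin k, ∑ i₂ : Fin k,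
        (if i₁ < i₂ then
          (ε * (((cluster Cl i₁ ∩ cluster Cl' j).card : ℝ) *
              ((cluster Cl i₂ ∩ cluster Cl' j).card : ℝ))
            + (ε/(k:ℝ)) * ((((cluster Cl i₁ ∩ cluster Cl' j).card : ℝ) *
                  ((cluster Cl i₁ \ (cluster Cl i₁ ∩ cluster Cl' j)).card : ℝ))
                + (((cluster Cl i₂ ∩ cluster Cl' j).card : ℝ) *
                  ((cluster Cl i₂ \ (cluster Cl i₂ ∩ cluster Cl' j)).card : ℝ)))) else 0))
      = ε * (∑ j : Fin k, ∑ i₁ : Fin k, ∑ i₂ : Fin k, if i₁ < i₂ then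
            ((cluster Cl i₁ ∩ cluster Cl' j).card : ℝ) *
              ((cluster Cl i₂ ∩ cluster Cl' j).card : ℝ) else 0)
        + (ε/(k:ℝ)) * (∑ j : Fin k, ∑ i₁ : Fin k, ∑ i₂ : Fin k, if i₁ < i₂ then
            ((((cluster Cl i₁ ∩ cluster Cl' j).card : ℝ) *
                ((cluster Cl i₁ \ (cluster Cl i₁ ∩ cluster Cl' j)).card : ℝ))
              + (((cluster Cl i₂ ∩ cluster Cl' j).card : ℝ) *
                ((cluster Cl i₂ \ (cluster Cl i₂ ∩ cluster Cl' j)).card : ℝ))) else 0) := by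
    simp_rw [Finset.mul_sum]
    rw [← Finset.sum_add_distrib]
    refine Finset.sum_congr rfl fun j _ => ?_
    rw [← Finset.sum_add_distrib]
    refine Finset.sum_congr rfl fun i₁ _ => ?_
    rw [← Finset.sum_add_distrib]
    refine Finset.sum_congr rfl fun i₂ _ => ?_
    split <;> simp
  -- step 4 bound
  have bW : (∑ j : Fin k, ∑ i₁ : Fin k, ∑ i₂ : Fin k, if i₁ < i₂ then
        ((((cluster Cl i₁ ∩ cluster Cl' j).card : ℝ) *
            ((cluster Cl i₁ \ (cluster Cl i₁ ∩ cluster Cl' j)).card : ℝ))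
          + (((cluster Cl i₂ ∩ cluster Cl' j).card : ℝ) *
            ((cluster Cl i₂ \ (cluster Cl i₂ ∩ cluster Cl' j)).card : ℝ))) else 0)
      ≤ (k:ℝ) * ∑ i : Fin k, ∑ j : Fin k, ((cluster Cl i ∩ cluster Cl' j).card : ℝ) *
          ((cluster Cl i \ (cluster Cl i ∩ cluster Cl' j)).card : ℝ) := by
    have e : (∑ i : Fin k, ∑ j : Fin k, ((cluster Cl i ∩ cluster Cl' j).card : ℝ) *
          ((cluster Cl i \ (cluster Cl i ∩ cluster Cl' j)).card : ℝ))
        = ∑ j : Fin k, ∑ i : Fin k, ((cluster Cl i ∩ cluster Cl' j).card : ℝ) *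
          ((cluster Cl i \ (cluster Cl i ∩ cluster Cl' j)).card : ℝ) := Finset.sum_comm
    rw [e, Finset.mul_sum]
    refine Finset.sum_le_sum fun j _ => ?_
    exact step4 (fun i => ((cluster Cl i ∩ cluster Cl' j).card : ℝ) *
        ((cluster Cl i \ (cluster Cl i ∩ cluster Cl' j)).card : ℝ)) (fun i => by positivity)
  -- nonnegativity facts
  have hS0 : (0:ℝ) ≤ ∑ u : V, ∑ v : V, if Cl' u = Cl' v ∧ Cl u < Cl v then (1:ℝ) else 0 :=
    Finset.sum_nonneg fun u _ => Finset.sum_nonneg fun v _ => by positivity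
  have hA0 : (0:ℝ) ≤ ∑ i : Fin k, ∑ j : Fin k, ((cluster Cl i ∩ cluster Cl' j).card : ℝ) *
        ((cluster Cl i \ (cluster Cl i ∩ cluster Cl' j)).card : ℝ) :=
    Finset.sum_nonneg fun i _ => Finset.sum_nonneg fun j _ => by positivity
  -- assemble
  set X := ∑ i : Fin k, ∑ j : Fin k,
      ((∑ u ∈ cluster Cl i ∩ cluster Cl' j,
          ∑ v ∈ cluster Cl i \ (cluster Cl i ∩ cluster Cl' j), fuv G Cl Cl' u v)
        - Fhat i j) with hXdef
  set Y := ∑ j : Fin k, ∑ i₁ : Fin k, ∑ i₂ : Fin k,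
      (if i₁ < i₂ then
        ((∑ u ∈ cluster Cl i₁ ∩ cluster Cl' j,
            ∑ v ∈ cluster Cl i₂ ∩ cluster Cl' j, fuv G Cl Cl' u v)
          - Fhat3 i₁ i₂ j) else 0) with hYdef
  have habs : |(1/2) * X + Y| ≤ (1/2) * |X| + |Y| := by
    refine (abs_add_le _ _).trans ?_
    rw [abs_mul]
    have : |(1:ℝ)/2| = 1/2 := by norm_num
    rw [this]
  have hAval := hA
  have hSval := hS
  have hddval := hdd
  -- final numeric assembly
  have hfinal : (1/2) * |X| + |Y|
      ≤ 3 * ε * dd Cl Cl' := by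
    have c1 : |X| ≤ ε * ∑ i : Fin k, ∑ j : Fin k, ((cluster Cl i ∩ cluster Cl' j).card : ℝ) *
          ((cluster Cl i \ (cluster Cl i ∩ cluster Cl' j)).card : ℝ) := bX.trans bX2
    have c2 : |Y| ≤ ε * (∑ j : Fin k, ∑ i₁ : Fin k, ∑ i₂ : Fin k, if i₁ < i₂ then
            ((cluster Cl i₁ ∩ cluster Cl' j).card : ℝ) *
              ((cluster Cl i₂ ∩ cluster Cl' j).card : ℝ) else 0)
        + (ε/(k:ℝ)) * (∑ j : Fin k, ∑ i₁ : Fin k, ∑ i₂ : Fin k, if i₁ < i₂ then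
            ((((cluster Cl i₁ ∩ cluster Cl' j).card : ℝ) *
                ((cluster Cl i₁ \ (cluster Cl i₁ ∩ cluster Cl' j)).card : ℝ))
              + (((cluster Cl i₂ ∩ cluster Cl' j).card : ℝ) *
                ((cluster Cl i₂ \ (cluster Cl i₂ ∩ cluster Cl' j)).card : ℝ))) else 0) := by
      rw [← bY3]
      exact bY.trans bY2
    have c3 : (ε/(k:ℝ)) * (∑ j : Fin k, ∑ i₁ : Fin k, ∑ i₂ : Fin k, if i₁ < i₂ then
            ((((cluster Cl i₁ ∩ cluster Cl' j).card : ℝ) *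
                ((cluster Cl i₁ \ (cluster Cl i₁ ∩ cluster Cl' j)).card : ℝ))
              + (((cluster Cl i₂ ∩ cluster Cl' j).card : ℝ) *
                ((cluster Cl i₂ \ (cluster Cl i₂ ∩ cluster Cl' j)).card : ℝ))) else 0)
        ≤ ε * ∑ i : Fin k, ∑ j : Fin k, ((cluster Cl i ∩ cluster Cl' j).card : ℝ) *
            ((cluster Cl i \ (cluster Cl i ∩ cluster Cl' j)).card : ℝ) := by
      have h := mul_le_mul_of_nonneg_left bW (le_of_lt (div_pos hε hk0))
      calc (ε/(k:ℝ)) * _ ≤ (ε/(k:ℝ)) * ((k:ℝ) * ∑ i : Fin k, ∑ j : Fin k,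
              ((cluster Cl i ∩ cluster Cl' j).card : ℝ) *
                ((cluster Cl i \ (cluster Cl i ∩ cluster Cl' j)).card : ℝ)) := h
        _ = ε * ∑ i : Fin k, ∑ j : Fin k, ((cluster Cl i ∩ cluster Cl' j).card : ℝ) *
              ((cluster Cl i \ (cluster Cl i ∩ cluster Cl' j)).card : ℝ) := by
            rw [← mul_assoc, div_mul_cancel₀ ε hk0.ne']
    -- abbreviate values
    rw [hAval] at c1 c3 hA0
    rw [hSval] at c2
    have h3 : 3 * ε * dd Cl Cl'
        = (3/2) * (ε * ∑ u : V, ∑ v : V, if Cl u = Cl v ∧ ¬ Cl' u = Cl' v then (1:ℝ) else 0)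
          + 3 * (ε * ∑ u : V, ∑ v : V, if Cl' u = Cl' v ∧ Cl u < Cl v then (1:ℝ) else 0) := by
      rw [hddval]; ring
    have hεS : 0 ≤ ε * ∑ u : V, ∑ v : V, if Cl' u = Cl' v ∧ Cl u < Cl v then (1:ℝ) else 0 :=
      mul_nonneg hε.le hS0
    linarith
  exact habs.trans hfinal
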